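/- Let 0<α₀<α₁, h>0, and take parameters (α₀,α₁,α₂,α₃)=(α₀,α₁,α₁,α₁). Then the set {(x,y)∈ℝ⁴×ℝ⁴ : C₁(x)=0, C₂(x,y)=0, H(x,y)=h, L₁₂²+L₁₃²+L₂₃²=2α₁h} equals {(x,y) : x₀=0, y₀=0, x₁²+x₂²+x₃²=α₁, y₁²+y₂²+y₃²=2h, x₁y₁+x₂y₂+x₃y₃=0}, where L₁₂=x₁y₂−x₂y₁, L₁₃=x₁y₃−x₃y₁, L₂₃=x₂y₃−x₃y₂ and H=½(y₀²+y₁²+y₂²+y₃²). In particular, at any point of this fiber x₀=0 and y₀=0. -/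

import Mathlib

noncomputable section

/-- Points of `T*ℝⁿ = ℝⁿ × ℝⁿ`, written `(x, y)`. -/
abbrev Pt (n : ℕ) := (Fin n → ℝ) × (Fin n → ℝ)

/-- `D(x) = Σᵢ xᵢ²/αᵢ²`. -/
def Dq {n : ℕ} (α : Fin n → ℝ) (x : Fin n → ℝ) : ℝ := ∑ i, (x i)^2 / (α i)^2

/-- Partial derivative of `f` in the direction `xᵢ`. -/
def pdx {n : ℕ} (f : Pt n → ℝ) (p : Pt n) (i : Fin n) : ℝ :=
  fderiv ℝ f p (Pi.single i 1, 0)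

/-- Partial derivative of `f` in the direction `yᵢ`. -/
def pdy {n : ℕ} (f : Pt n → ℝ) (p : Pt n) (i : Fin n) : ℝ :=
  fderiv ℝ f p (0, Pi.single i 1)

/-- The Dirac bracket on `T*ℝⁿ` for the ellipsoid with semi-axes `√(αᵢ)`:
`{f,g} = Σᵢₖ (∂f/∂xᵢ ∂g/∂yₖ − ∂g/∂xᵢ ∂f/∂yₖ)(δᵢₖ − xᵢxₖ/(D αᵢ αₖ))
        − Σᵢₖ (∂f/∂yᵢ)(∂g/∂yₖ)(xᵢyₖ − xₖyᵢ)/(D αᵢ αₖ)`. -/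
def dirac {n : ℕ} (α : Fin n → ℝ) (f g : Pt n → ℝ) (p : Pt n) : ℝ :=
  (∑ i, ∑ k,
    (pdx f p i * pdy g p k - pdx g p i * pdy f p k) *
      ((if i = k then (1:ℝ) else 0) - p.1 i * p.1 k / (Dq α p.1 * α i * α k)))
  - ∑ i, ∑ k,
      pdy f p i * pdy g p k * (p.1 i * p.2 k - p.1 k * p.2 i) / (Dq α p.1 * α i * α k)

/-- The constraint `C₁(x) = Σᵢ xᵢ²/αᵢ − 1`. -/
def C1 {n : ℕ} (α : Fin n → ℝ) (x : Fin n → ℝ) : ℝ := (∑ i, (x i)^2 / α i) - 1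

/-- The constraint `C₂(x,y) = Σᵢ xᵢyᵢ/αᵢ`. -/
def C2 {n : ℕ} (α : Fin n → ℝ) (p : Pt n) : ℝ := ∑ i, p.1 i * p.2 i / α i

/-- The Hamiltonian `H = ½(y₀² + y₁² + y₂² + y₃²)`. -/
def H4 (p : Pt 4) : ℝ := (1/2) * ((p.2 0)^2 + (p.2 1)^2 + (p.2 2)^2 + (p.2 3)^2)

/-- The angular momentum `J₁ = x₀y₁ − x₁y₀`. -/
def Jmom1 (p : Pt 4) : ℝ := p.1 0 * p.2 1 - p.1 1 * p.2 0

/-- The angular momentum `J₂ = x₂y₃ − x₃y₂`. -/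
def Jmom2 (p : Pt 4) : ℝ := p.1 2 * p.2 3 - p.1 3 * p.2 2
/-- The angular momentum `L₁₂ = x₁y₂ − x₂y₁`. -/
def L12 (p : Pt 4) : ℝ := p.1 1 * p.2 2 - p.1 2 * p.2 1

/-- The angular momentum `L₁₃ = x₁y₃ − x₃y₁`. -/
def L13 (p : Pt 4) : ℝ := p.1 1 * p.2 3 - p.1 3 * p.2 1

/-- The angular momentum `L₂₃ = x₂y₃ − x₃y₂`. -/
def L23 (p : Pt 4) : ℝ := p.1 2 * p.2 3 - p.1 3 * p.2 2

/-- The squared total angular momentum `J² = L₁₂² + L₁₃² + L₂₃²`. -/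
def Jsq (p : Pt 4) : ℝ := (L12 p)^2 + (L13 p)^2 + (L23 p)^2


lemma stmt19_key (α₀ α₁ h x0 x1 x2 x3 y0 y1 y2 y3 : ℝ) (hα₀ : 0 < α₀) (h01 : α₀ < α₁)
    (hh : 0 < h)
    (e1 : x0^2*α₁ + (x1^2+x2^2+x3^2)*α₀ = α₀*α₁)
    (e2 : x0*y0*α₁ + (x1*y1+x2*y2+x3*y3)*α₀ = 0)
    (e3 : y0^2+y1^2+y2^2+y3^2 = 2*h)
    (e4 : (x1*y2-x2*y1)^2+(x1*y3-x3*y1)^2+(x2*y3-x3*y2)^2 = 2*α₁*h) :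
    x0 = 0 ∧ y0 = 0 ∧ x1^2+x2^2+x3^2 = α₁ ∧ y1^2+y2^2+y3^2 = 2*h ∧
      x1*y1+x2*y2+x3*y3 = 0 := by
  have hα1 : 0 < α₁ := hα₀.trans h01
  set a := x1^2+x2^2+x3^2 with hadef
  set b := y1^2+y2^2+y3^2 with hbdef
  set c := x1*y1+x2*y2+x3*y3 with hcdef
  have ha : 0 ≤ a := by positivity
  have lag : a*b = c^2 + 2*α₁*h := by linear_combination e4
  have hb : b = 2*h - y0^2 := by linarith
  have hx0sq : x0^2 ≤ α₀ := by nlinarith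
  rw [hb] at lag
  have main : α₀*c^2 + α₀*α₁*y0^2 + 2*h*α₁*x0^2 = α₁*x0^2*y0^2 := by
    linear_combination (2*h - y0^2)*e1 - α₀*lag
  have hx0le : 2*h*α₁*x0^2 ≤ 0 := by
    nlinarith [mul_nonneg (mul_nonneg hα1.le (sub_nonneg.2 hx0sq)) (sq_nonneg y0),
      mul_nonneg hα₀.le (sq_nonneg c)]
  have hx0 : x0^2 = 0 := by
    by_contra hne
    have h2 : 0 < x0^2 := lt_of_le_of_ne (sq_nonneg x0) (Ne.symm hne)
    nlinarith [mul_pos (mul_pos hh hα1) h2]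
  have hx0' : x0 = 0 := pow_eq_zero_iff two_ne_zero |>.mp hx0
  rw [hx0'] at e1 e2
  have hax : a = α₁ := mul_right_cancel₀ hα₀.ne' (by linear_combination e1)
  have hc : c = 0 := mul_right_cancel₀ hα₀.ne' (by linear_combination e2)
  rw [hax, hc] at lag
  have hy0sq : y0^2 = 0 :=
    mul_left_cancel₀ hα1.ne' (by linear_combination -lag)
  have hy0 : y0 = 0 := pow_eq_zero_iff two_ne_zero |>.mp hy0sq
  exact ⟨hx0', hy0, hax, by linarith, hc⟩

lemma stmt19_fwd (α₀ α₁ h : ℝ) (hα₀ : 0 < α₀) (hα₀₁ : α₀ < α₁) (hh : 0 < h) (p : Pt 4)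
    (h1 : C1 ![α₀, α₁, α₁, α₁] p.1 = 0) (h2 : C2 ![α₀, α₁, α₁, α₁] p = 0)
    (h3 : H4 p = h) (h4 : Jsq p = 2 * α₁ * h) :
    p.1 0 = 0 ∧ p.2 0 = 0 ∧
      (p.1 1)^2 + (p.1 2)^2 + (p.1 3)^2 = α₁ ∧
      (p.2 1)^2 + (p.2 2)^2 + (p.2 3)^2 = 2 * h ∧
      p.1 1 * p.2 1 + p.1 2 * p.2 2 + p.1 3 * p.2 3 = 0 := by
  have hα1 : 0 < α₁ := hα₀.trans hα₀₁
  simp only [C1, C2, H4, Jsq, L12, L13, L23, Fin.sum_univ_four, Matrix.cons_val_zero,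
    Matrix.cons_val_one, Matrix.head_cons, Matrix.cons_val_two, Matrix.tail_cons,
    Matrix.cons_val_three] at h1 h2 h3 h4
  have h1' := h1
  have h2' := h2
  field_simp at h1' h2'
  have e1 : (p.1 0)^2*α₁ + ((p.1 1)^2+(p.1 2)^2+(p.1 3)^2)*α₀ = α₀*α₁ := by
    have h'' : ((p.1 0)^2*α₁ + ((p.1 1)^2+(p.1 2)^2+(p.1 3)^2)*α₀) * α₁^2 = (α₀*α₁) * α₁^2 := by
      linear_combination α₁^2 * h1'
    exact mul_right_cancel₀ (pow_ne_zero 2 hα1.ne') h''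
  have e2 : p.1 0*p.2 0*α₁ + (p.1 1*p.2 1+p.1 2*p.2 2+p.1 3*p.2 3)*α₀ = 0 := by
    have h'' : (p.1 0*p.2 0*α₁ + (p.1 1*p.2 1+p.1 2*p.2 2+p.1 3*p.2 3)*α₀) * α₁^2 = 0 * α₁^2 := by
      linear_combination α₁^2 * h2'
    exact mul_right_cancel₀ (pow_ne_zero 2 hα1.ne') h''
  exact stmt19_key α₀ α₁ h _ _ _ _ _ _ _ _ hα₀ hα₀₁ hh e1 e2 (by linear_combination 2*h3)
    (by linear_combination h4)

/-- the fiber of the energy-Casimir map `(H,J²)` of the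
`SO(1)×SO(3)` ellipsoid over the maximal value `(h, 2α₁h)` is the unit circle
bundle over the sphere of radius `√α₁` (diffeomorphic to `SO(3)`); in particular
`x₀ = 0` and `y₀ = 0` on this fiber. -/
theorem stmt19 (α₀ α₁ h : ℝ) (hα₀ : 0 < α₀) (hα₀₁ : α₀ < α₁) (hh : 0 < h) :
    ({p : Pt 4 | C1 ![α₀, α₁, α₁, α₁] p.1 = 0 ∧ C2 ![α₀, α₁, α₁, α₁] p = 0 ∧
        H4 p = h ∧ Jsq p = 2 * α₁ * h}
      = {p : Pt 4 | p.1 0 = 0 ∧ p.2 0 = 0 ∧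
          (p.1 1)^2 + (p.1 2)^2 + (p.1 3)^2 = α₁ ∧
          (p.2 1)^2 + (p.2 2)^2 + (p.2 3)^2 = 2 * h ∧
          p.1 1 * p.2 1 + p.1 2 * p.2 2 + p.1 3 * p.2 3 = 0}) ∧
    (∀ p : Pt 4, C1 ![α₀, α₁, α₁, α₁] p.1 = 0 → C2 ![α₀, α₁, α₁, α₁] p = 0 →
      H4 p = h → Jsq p = 2 * α₁ * h → p.1 0 = 0 ∧ p.2 0 = 0) := by
  have hα1 : 0 < α₁ := hα₀.trans hα₀₁
  constructor
  · ext p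
    simp only [Set.mem_setOf_eq]
    constructor
    · rintro ⟨h1, h2, h3, h4⟩
      exact stmt19_fwd α₀ α₁ h hα₀ hα₀₁ hh p h1 h2 h3 h4
    · rintro ⟨hx0, hy0, hA, hB, hC⟩
      refine ⟨?_, ?_, ?_, ?_⟩
      · simp only [C1, Fin.sum_univ_four, Matrix.cons_val_zero, Matrix.cons_val_one,
          Matrix.head_cons, Matrix.cons_val_two, Matrix.tail_cons, Matrix.cons_val_three, hx0]
        field_simp
        linear_combination α₀ * hA
      · simp only [C2, Fin.sum_univ_four, Matrix.cons_val_zero, Matrix.cons_val_one,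
          Matrix.head_cons, Matrix.cons_val_two, Matrix.tail_cons, Matrix.cons_val_three, hx0]
        field_simp
        linear_combination α₀ * hC
      · simp only [H4, hy0]; linarith
      · simp only [Jsq, L12, L13, L23]
        linear_combination (p.2 1^2+p.2 2^2+p.2 3^2)*hA + α₁*hB - (p.1 1*p.2 1+p.1 2*p.2 2+p.1 3*p.2 3)*hC
  · intro p h1 h2 h3 h4
    obtain ⟨a, b, -, -, -⟩ := stmt19_fwd α₀ α₁ h hα₀ hα₀₁ hh p h1 h2 h3 h4
    exact ⟨a, b⟩
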